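/- arXiv:math/0405189 — 5 statements merged into one kernel-verified Lean document; each statement's English description precedes it below -/
import Mathlib

section
/- For all ξ, η ∈ ℂ and r ∈ ℝ, the squared Euclidean distance from the origin to the point γ_{ξ,η}(r) equals ‖γ_{ξ,η}(0)‖² + r². Consequently, r = 0 gives the point on the line γ_{ξ,η} that lies closest to the origin, and this closest point is unique. -/
open Complex ComplexConjugate

/-- Inverse stereographic projection from the south pole:
`ν(ξ) = (2ξ/(1+|ξ|²), (1−|ξ|²)/(1+|ξ|²)) ∈ ℂ × ℝ`. -/
noncomputable def nu (ξ : ℂ) : ℂ × ℝ :=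
  ((2 * ξ) / (((1 + Complex.normSq ξ : ℝ) : ℂ)),
   (1 - Complex.normSq ξ) / (1 + Complex.normSq ξ))

/-- The parametrized line `γ_{ξ,η}(r) = (z(r), t(r)) ∈ ℂ × ℝ` with
`z(r) = (2(η − conj(η)ξ²) + 2ξ(1+|ξ|²)r)/(1+|ξ|²)²` and
`t(r) = (−2(η·conj(ξ) + conj(η)·ξ) + (1−|ξ|⁴)r)/(1+|ξ|²)²`. -/
noncomputable def gamma (ξ η : ℂ) (r : ℝ) : ℂ × ℝ :=
  ((2 * (η - conj η * ξ ^ 2) + 2 * ξ * ((1 + Complex.normSq ξ : ℝ) : ℂ) * (r : ℂ)) /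
      (((1 + Complex.normSq ξ : ℝ) : ℂ) ^ 2),
   (-2 * (η * conj ξ + conj η * ξ).re + (1 - Complex.normSq ξ ^ 2) * r) /
      (1 + Complex.normSq ξ) ^ 2)

lemma gamma_key (ξ η : ℂ) (r : ℝ) :
    Complex.normSq (gamma ξ η r).1 + (gamma ξ η r).2 ^ 2 =
      (Complex.normSq (gamma ξ η 0).1 + (gamma ξ η 0).2 ^ 2) + r ^ 2 := by
  have hD : (0:ℝ) < 1 + Complex.normSq ξ := by
    have := Complex.normSq_nonneg ξ; linarith
  obtain ⟨a, b⟩ := ξ; obtain ⟨c, d⟩ := η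
  have hab : (0:ℝ) < 1 + (a*a + b*b) := by nlinarith
  simp only [gamma, Complex.normSq_mk, Complex.normSq_apply, pow_two, Complex.div_re,
    Complex.div_im, Complex.add_re, Complex.add_im, Complex.mul_re, Complex.mul_im,
    Complex.sub_re, Complex.sub_im, Complex.ofReal_re, Complex.ofReal_im,
    Complex.conj_re, Complex.conj_im, Complex.ofReal_zero, mul_zero, zero_mul,
    sub_zero, add_zero, zero_add, Complex.re_ofNat, Complex.im_ofNat] at *
  field_simp
  ring

/-- The squared Euclidean distance from the origin to `γ_{ξ,η}(r)` equals
`‖γ_{ξ,η}(0)‖² + r²`; consequently `r = 0` gives the unique point on the line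
closest to the origin. -/
theorem gamma_sq_dist (ξ η : ℂ) :
    (∀ r : ℝ,
      Complex.normSq (gamma ξ η r).1 + (gamma ξ η r).2 ^ 2 =
        (Complex.normSq (gamma ξ η 0).1 + (gamma ξ η 0).2 ^ 2) + r ^ 2) ∧
    (∀ r : ℝ,
      Complex.normSq (gamma ξ η 0).1 + (gamma ξ η 0).2 ^ 2 ≤
        Complex.normSq (gamma ξ η r).1 + (gamma ξ η r).2 ^ 2) ∧
    (∀ r : ℝ,
      Complex.normSq (gamma ξ η r).1 + (gamma ξ η r).2 ^ 2 =
        Complex.normSq (gamma ξ η 0).1 + (gamma ξ η 0).2 ^ 2 → r = 0) := by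
  refine ⟨gamma_key ξ η, fun r => ?_, fun r h => ?_⟩
  · rw [gamma_key ξ η r]; nlinarith [sq_nonneg r]
  · rw [gamma_key ξ η r] at h
    have : r ^ 2 = 0 := by linarith
    exact pow_eq_zero_iff (by norm_num) |>.mp this
end

section
/- Let a₁, a₂, a₃ > 0 and ξ ∈ ℂ. Set D(ξ) = a₁(ξ+conj(ξ))² − a₂(ξ−conj(ξ))² + a₃(1−|ξ|²)². Then D(ξ) > 0, and with η = [a₁(ξ+conj(ξ))(1−ξ²) + a₂(ξ−conj(ξ))(1+ξ²) − 2a₃ξ(1−|ξ|²)] / (2√(D(ξ))) and r = √(D(ξ))/(1+|ξ|²), the point (z,t) = γ_{ξ,η}(r) satisfies x₁²/a₁ + x₂²/a₂ + x₃²/a₃ = 1 where z = x₁ + ix₂ and t = x₃; i.e. the point lies on the ellipsoid with semi-axes √a₁, √a₂, √a₃. -/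
set_option maxHeartbeats 2000000

open Complex ComplexConjugate

/-- The radicand of the ellipsoid parametrization, as a complex number:
`a₁(ξ+conj ξ)² − a₂(ξ−conj ξ)² + a₃(1−|ξ|²)²` (it is in fact real). -/
noncomputable def Dc (a₁ a₂ a₃ : ℝ) (ξ : ℂ) : ℂ :=
  (a₁ : ℂ) * (ξ + conj ξ) ^ 2 - (a₂ : ℂ) * (ξ - conj ξ) ^ 2 +
    (a₃ : ℂ) * (((1 - Complex.normSq ξ : ℝ) : ℂ)) ^ 2

/-- The ellipsoid parametrization: with
`η = [a₁(ξ+conj ξ)(1−ξ²) + a₂(ξ−conj ξ)(1+ξ²) − 2a₃ξ(1−|ξ|²)]/(2√D)` and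
`r = √D/(1+|ξ|²)`, the radicand `D` is positive and the point `γ_{ξ,η}(r)` lies on the
ellipsoid `x₁²/a₁ + x₂²/a₂ + x₃²/a₃ = 1`. -/
theorem ellipsoid_parametrization (a₁ a₂ a₃ : ℝ)
    (ha₁ : 0 < a₁) (ha₂ : 0 < a₂) (ha₃ : 0 < a₃) (ξ : ℂ) (η : ℂ) (r : ℝ)
    (hη : η = ((a₁ : ℂ) * (ξ + conj ξ) * (1 - ξ ^ 2) +
        (a₂ : ℂ) * (ξ - conj ξ) * (1 + ξ ^ 2) -
        2 * (a₃ : ℂ) * ξ * (((1 - Complex.normSq ξ : ℝ) : ℂ))) /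
        (2 * ((Real.sqrt (Dc a₁ a₂ a₃ ξ).re : ℝ) : ℂ)))
    (hr : r = Real.sqrt (Dc a₁ a₂ a₃ ξ).re / (1 + Complex.normSq ξ)) :
    0 < (Dc a₁ a₂ a₃ ξ).re ∧
    (gamma ξ η r).1.re ^ 2 / a₁ + (gamma ξ η r).1.im ^ 2 / a₂ +
      (gamma ξ η r).2 ^ 2 / a₃ = 1 := by
  set x := ξ.re with hx
  set y := ξ.im with hy
  have hD : (Dc a₁ a₂ a₃ ξ).re = 4*a₁*x^2 + 4*a₂*y^2 + a₃*(1 - x^2 - y^2)^2 := by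
    simp [Dc, Complex.normSq_apply, Complex.add_re, Complex.add_im, Complex.sub_re, Complex.sub_im,
      Complex.mul_re, Complex.mul_im, Complex.ofReal_re, Complex.ofReal_im, pow_two]
    ring
  have hDpos : 0 < (Dc a₁ a₂ a₃ ξ).re := by
    rw [hD]
    rcases eq_or_ne x 0 with hx0 | hx0
    · rcases eq_or_ne y 0 with hy0 | hy0
      · rw [hx0, hy0]; nlinarith
      · nlinarith [sq_nonneg x, sq_nonneg (1 - x^2 - y^2),
          mul_pos ha₂ (pow_pos (abs_pos.mpr hy0) 2), _root_.sq_abs y]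
    · nlinarith [sq_nonneg y, sq_nonneg (1 - x^2 - y^2),
        mul_pos ha₁ (pow_pos (abs_pos.mpr hx0) 2), _root_.sq_abs x]
  refine ⟨hDpos, ?_⟩
  set s := Real.sqrt (Dc a₁ a₂ a₃ ξ).re with hsdef
  have hspos : 0 < s := Real.sqrt_pos.mpr hDpos
  have hs2 : s ^ 2 = (Dc a₁ a₂ a₃ ξ).re := Real.sq_sqrt hDpos.le
  have hn : Complex.normSq ξ = x^2 + y^2 := by
    simp [Complex.normSq_apply, pow_two]
    rfl
  have hcpos : (0:ℝ) < 1 + Complex.normSq ξ := by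
    have := Complex.normSq_nonneg ξ; linarith
  have hsC : ((s:ℝ):ℂ) ≠ 0 := Complex.ofReal_ne_zero.mpr hspos.ne'
  have hcC : (((1 + Complex.normSq ξ :ℝ)):ℂ) ≠ 0 := Complex.ofReal_ne_zero.mpr hcpos.ne'
  obtain ⟨N, hN⟩ : ∃ N : ℂ, N = (a₁ : ℂ) * (ξ + conj ξ) * (1 - ξ ^ 2) +
        (a₂ : ℂ) * (ξ - conj ξ) * (1 + ξ ^ 2) -
        2 * (a₃ : ℂ) * ξ * (((1 - Complex.normSq ξ : ℝ) : ℂ)) := ⟨_, rfl⟩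
  rw [← hN] at hη
  obtain ⟨c, hc⟩ : ∃ c : ℝ, c = 1 + Complex.normSq ξ := ⟨_, rfl⟩
  have hcpos' : 0 < c := hc ▸ hcpos
  have hcne : c ≠ 0 := hcpos'.ne'
  have hcC' : ((c:ℝ):ℂ) ≠ 0 := Complex.ofReal_ne_zero.mpr hcpos'.ne'
  have hc2 : c = 1 + (x^2 + y^2) := by rw [hc, hn]
  -- the z-coordinate as a single quotient by a real number
  have hz : (gamma ξ η r).1 =
      (N - conj N * ξ ^ 2 + 2 * ξ * ((s:ℝ):ℂ) ^ 2) / (((s * c ^ 2 : ℝ)):ℂ) := by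
    simp only [gamma]
    rw [hη, hr, ← hc]
    rw [map_div₀, map_mul, Complex.conj_ofReal, map_ofNat]
    push_cast
    field_simp
  -- real and imaginary parts of the numerator
  have hnum1 : (N - conj N * ξ ^ 2 + 2 * ξ * ((s:ℝ):ℂ) ^ 2).re =
      (2*a₁*x*(1-x^2+y^2) - 4*a₂*x*y^2 - 2*a₃*x*(1-x^2-y^2))*(1-x^2+y^2)
        - 2*x*y*(-4*a₁*x^2*y + 2*a₂*y*(1+x^2-y^2) - 2*a₃*y*(1-x^2-y^2))
        + 2*x*s^2 := by
    rw [hN]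
    simp only [pow_two]
    simp only [Complex.add_re, Complex.add_im, Complex.sub_re, Complex.sub_im, Complex.mul_re,
      Complex.mul_im, Complex.conj_re, Complex.conj_im, Complex.one_re, Complex.one_im,
      Complex.ofReal_re, Complex.ofReal_im, Complex.re_ofNat, Complex.im_ofNat,
      Complex.normSq_apply]
    ring
  have hnum2 : (N - conj N * ξ ^ 2 + 2 * ξ * ((s:ℝ):ℂ) ^ 2).im =
      (-4*a₁*x^2*y + 2*a₂*y*(1+x^2-y^2) - 2*a₃*y*(1-x^2-y^2))*(1+x^2-y^2)
        - 2*x*y*(2*a₁*x*(1-x^2+y^2) - 4*a₂*x*y^2 - 2*a₃*x*(1-x^2-y^2))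
        + 2*y*s^2 := by
    rw [hN]
    simp only [pow_two]
    simp only [Complex.add_re, Complex.add_im, Complex.sub_re, Complex.sub_im, Complex.mul_re,
      Complex.mul_im, Complex.conj_re, Complex.conj_im, Complex.one_re, Complex.one_im,
      Complex.ofReal_re, Complex.ofReal_im, Complex.re_ofNat, Complex.im_ofNat,
      Complex.normSq_apply]
    ring
  have h1 : (gamma ξ η r).1.re =
      ((2*a₁*x*(1-x^2+y^2) - 4*a₂*x*y^2 - 2*a₃*x*(1-x^2-y^2))*(1-x^2+y^2)
        - 2*x*y*(-4*a₁*x^2*y + 2*a₂*y*(1+x^2-y^2) - 2*a₃*y*(1-x^2-y^2))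
        + 2*x*s^2) / (s * c^2) := by
    rw [hz, Complex.div_ofReal_re, hnum1]
  have h2 : (gamma ξ η r).1.im =
      ((-4*a₁*x^2*y + 2*a₂*y*(1+x^2-y^2) - 2*a₃*y*(1-x^2-y^2))*(1+x^2-y^2)
        - 2*x*y*(2*a₁*x*(1-x^2+y^2) - 4*a₂*x*y^2 - 2*a₃*x*(1-x^2-y^2))
        + 2*y*s^2) / (s * c^2) := by
    rw [hz, Complex.div_ofReal_im, hnum2]
  -- the t-coordinate
  have hw : η * conj ξ + conj η * ξ = (N * conj ξ + conj N * ξ) / (((2*s : ℝ)):ℂ) := by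
    rw [hη, map_div₀, map_mul, Complex.conj_ofReal, map_ofNat]
    push_cast
    field_simp
  have hnum3 : (N * conj ξ + conj N * ξ).re =
      2*((2*a₁*x*(1-x^2+y^2) - 4*a₂*x*y^2 - 2*a₃*x*(1-x^2-y^2))*x
        + (-4*a₁*x^2*y + 2*a₂*y*(1+x^2-y^2) - 2*a₃*y*(1-x^2-y^2))*y) := by
    rw [hN]
    simp only [pow_two]
    simp only [Complex.add_re, Complex.add_im, Complex.sub_re, Complex.sub_im, Complex.mul_re,
      Complex.mul_im, Complex.conj_re, Complex.conj_im, Complex.one_re, Complex.one_im,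
      Complex.ofReal_re, Complex.ofReal_im, Complex.re_ofNat, Complex.im_ofNat,
      Complex.normSq_apply]
    ring
  have h3 : (gamma ξ η r).2 =
      (-2*((2*a₁*x*(1-x^2+y^2) - 4*a₂*x*y^2 - 2*a₃*x*(1-x^2-y^2))*x
          + (-4*a₁*x^2*y + 2*a₂*y*(1+x^2-y^2) - 2*a₃*y*(1-x^2-y^2))*y)*c
        + (1 - (x^2+y^2)^2)*s^2) / (s * c^3) := by
    simp only [gamma]
    rw [hw, Complex.div_ofReal_re, hnum3, hr, ← hc, hn]
    have h2s : (0:ℝ) < 2*s := by linarith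
    field_simp
  have hs2D : s^2 = 4*a₁*x^2 + 4*a₂*y^2 + a₃*(1 - x^2 - y^2)^2 := hs2.trans hD
  have hK : (0:ℝ) < a₁*a₂*a₃*s^2*c^6 :=
    mul_pos (mul_pos (mul_pos (mul_pos ha₁ ha₂) ha₃) (pow_pos hspos 2)) (pow_pos hcpos' 6)
  have e1 : ∀ A : ℝ, (A/(s*c^2))^2/a₁ = (a₂*a₃*c^2*A^2)/(a₁*a₂*a₃*s^2*c^6) := by
    intro A
    rw [div_pow, div_div, div_eq_div_iff (by positivity) hK.ne']
    ring
  have e2 : ∀ A : ℝ, (A/(s*c^2))^2/a₂ = (a₁*a₃*c^2*A^2)/(a₁*a₂*a₃*s^2*c^6) := by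
    intro A
    rw [div_pow, div_div, div_eq_div_iff (by positivity) hK.ne']
    ring
  have e3 : ∀ A : ℝ, (A/(s*c^3))^2/a₃ = (a₁*a₂*A^2)/(a₁*a₂*a₃*s^2*c^6) := by
    intro A
    rw [div_pow, div_div, div_eq_div_iff (by positivity) hK.ne']
    ring
  rw [h1, h2, h3, e1, e2, e3, ← add_div, ← add_div,
    div_eq_iff hK.ne', one_mul, hs2D, hc2]
  ring
end

section
/- Let a₁, a₂, a₃ > 0 and ξ ∈ ℂ, and let η, r and the point (z,t) = γ_{ξ,η}(r) with z = x₁ + ix₂, t = x₃ be as in the ellipsoid parametrization: η = [a₁(ξ+conj(ξ))(1−ξ²) + a₂(ξ−conj(ξ))(1+ξ²) − 2a₃ξ(1−|ξ|²)]/(2√(D(ξ))), r = √(D(ξ))/(1+|ξ|²), D(ξ) = a₁(ξ+conj(ξ))² − a₂(ξ−conj(ξ))² + a₃(1−|ξ|²)². Then the direction ν(ξ) of the line satisfies ν(ξ) = r·(x₁/a₁ + i·x₂/a₂, x₃/a₃); i.e. ν(ξ) is parallel to the gradient of F(x₁,x₂,x₃) = x₁²/a₁ + x₂²/a₂ + x₃²/a₃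 at (x₁,x₂,x₃), so the line γ_{ξ,η} is normal to the ellipsoid F = 1 at that point. -/
open Complex ComplexConjugate

/-- In the ellipsoid parametrization, with `(z,t) = γ_{ξ,η}(r)`, `z = x₁ + ix₂`,
`t = x₃`, the direction of the line satisfies `ν(ξ) = r·(x₁/a₁ + i·x₂/a₂, x₃/a₃)`:
the line `γ_{ξ,η}` is normal to the ellipsoid `x₁²/a₁ + x₂²/a₂ + x₃²/a₃ = 1` at
that point. -/
theorem ellipsoid_normal (a₁ a₂ a₃ : ℝ)
    (ha₁ : 0 < a₁) (ha₂ : 0 < a₂) (ha₃ : 0 < a₃) (ξ : ℂ) (η : ℂ) (r : ℝ)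
    (hη : η = ((a₁ : ℂ) * (ξ + conj ξ) * (1 - ξ ^ 2) +
        (a₂ : ℂ) * (ξ - conj ξ) * (1 + ξ ^ 2) -
        2 * (a₃ : ℂ) * ξ * (((1 - Complex.normSq ξ : ℝ) : ℂ))) /
        (2 * ((Real.sqrt (Dc a₁ a₂ a₃ ξ).re : ℝ) : ℂ)))
    (hr : r = Real.sqrt (Dc a₁ a₂ a₃ ξ).re / (1 + Complex.normSq ξ)) :
    nu ξ = r • ((((gamma ξ η r).1.re / a₁ : ℝ) : ℂ) +
        (((gamma ξ η r).1.im / a₂ : ℝ) : ℂ) * Complex.I,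
      (gamma ξ η r).2 / a₃) := by
  have hD : Dc a₁ a₂ a₃ ξ
      = ((a₁ * (2*ξ.re)^2 + a₂ * (2*ξ.im)^2 + a₃ * (1 - Complex.normSq ξ)^2 : ℝ) : ℂ) := by
    simp only [Complex.ext_iff, Dc, Complex.normSq_apply, sq, Complex.mul_re, Complex.mul_im,
      Complex.add_re, Complex.add_im, Complex.sub_re, Complex.sub_im, Complex.conj_re,
      Complex.conj_im, Complex.ofReal_re, Complex.ofReal_im, Complex.one_re, Complex.one_im]
    constructor <;> ring
  have hpos : 0 < a₁ * (2*ξ.re)^2 + a₂ * (2*ξ.im)^2 + a₃ * (1 - Complex.normSq ξ)^2 := by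
    rcases eq_or_ne ξ 0 with h | h
    · simp [h]; positivity
    · rcases eq_or_ne ξ.re 0 with h1 | h1
      · have h2 : ξ.im ≠ 0 := fun h2 => h (Complex.ext_iff.mpr ⟨by simp [h1], by simp [h2]⟩)
        positivity
      · positivity
  have hDre : (Dc a₁ a₂ a₃ ξ).re
      = a₁ * (2*ξ.re)^2 + a₂ * (2*ξ.im)^2 + a₃ * (1 - Complex.normSq ξ)^2 := by
    rw [hD, Complex.ofReal_re]
  set s := Real.sqrt (Dc a₁ a₂ a₃ ξ).re with hsdef
  have hs0 : 0 < s := Real.sqrt_pos.mpr (by rw [hDre]; exact hpos)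
  have hs2 : (s:ℂ)^2 = Dc a₁ a₂ a₃ ξ := by
    have h : s^2 = (Dc a₁ a₂ a₃ ξ).re := Real.sq_sqrt (by rw [hDre]; exact hpos.le)
    calc (s:ℂ)^2 = ((s^2 : ℝ) : ℂ) := by push_cast; ring
    _ = (((Dc a₁ a₂ a₃ ξ).re : ℝ) : ℂ) := by rw [h]
    _ = Dc a₁ a₂ a₃ ξ := by rw [hDre]; exact hD.symm
  have hs2' : (s:ℂ)^2 = (a₁:ℂ)*(ξ+conj ξ)^2 - (a₂:ℂ)*(ξ-conj ξ)^2 + (a₃:ℂ)*(1-ξ*conj ξ)^2 := by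
    rw [hs2, Dc]
    push_cast
    rw [← Complex.mul_conj]
  set N := (a₁ : ℂ) * (ξ + conj ξ) * (1 - ξ ^ 2) +
        (a₂ : ℂ) * (ξ - conj ξ) * (1 + ξ ^ 2) -
        2 * (a₃ : ℂ) * ξ * (((1 - Complex.normSq ξ : ℝ) : ℂ)) with hN
  have hu0 : (0:ℝ) < 1 + Complex.normSq ξ := by
    have := Complex.normSq_nonneg ξ; linarith
  have huC : (1:ℂ) + (Complex.normSq ξ : ℂ) ≠ 0 := by
    have : ((1 + Complex.normSq ξ : ℝ) : ℂ) ≠ 0 := Complex.ofReal_ne_zero.mpr hu0.ne'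
    push_cast at this; exact this
  have hsC : (s:ℂ) ≠ 0 := Complex.ofReal_ne_zero.mpr hs0.ne'
  have ha₁C : (a₁:ℂ) ≠ 0 := Complex.ofReal_ne_zero.mpr ha₁.ne'
  have ha₂C : (a₂:ℂ) ≠ 0 := Complex.ofReal_ne_zero.mpr ha₂.ne'
  have ha₃C : (a₃:ℂ) ≠ 0 := Complex.ofReal_ne_zero.mpr ha₃.ne'
  -- closed form of z
  have hz : (gamma ξ η r).1
      = (N - conj N * ξ^2 + 2*ξ*(s:ℂ)^2) / ((s:ℂ) * ((1:ℂ) + (Complex.normSq ξ : ℂ))^2) := by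
    rw [gamma, hη, hr]
    simp only [map_div₀, map_mul, map_sub, map_add, map_pow, map_ofNat, Complex.conj_conj,
      Complex.conj_ofReal]
    push_cast
    field_simp
  have hzc : conj (gamma ξ η r).1
      = (conj N - N * (conj ξ)^2 + 2*(conj ξ)*(s:ℂ)^2)
        / ((s:ℂ) * ((1:ℂ) + (Complex.normSq ξ : ℂ))^2) := by
    rw [hz]
    simp only [map_div₀, map_mul, map_sub, map_add, map_pow, map_ofNat, Complex.conj_conj,
      Complex.conj_ofReal, map_one]
  have hw : (((η * conj ξ + conj η * ξ).re : ℝ) : ℂ) = η * conj ξ + conj η * ξ := by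
    apply Complex.conj_eq_iff_re.mp
    simp only [map_add, map_mul, Complex.conj_conj]
    ring
  have ht : ((gamma ξ η r).2 : ℂ)
      = (-(N * conj ξ + conj N * ξ) + (1 - (Complex.normSq ξ : ℂ))*(s:ℂ)^2)
        / ((s:ℂ) * ((1:ℂ) + (Complex.normSq ξ : ℂ))^2) := by
    rw [gamma]
    push_cast
    rw [hw, hη, hr]
    simp only [map_div₀, map_mul, map_sub, map_add, map_pow, map_ofNat, Complex.conj_conj,
      Complex.conj_ofReal]
    push_cast
    field_simp
    ring
  have huC' : (1:ℂ) + ξ * conj ξ ≠ 0 := by rw [Complex.mul_conj]; exact huC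
  -- fully substituted closed forms
  have hz3 : (gamma ξ η r).1
      = (((a₁:ℂ)*(ξ+conj ξ)*(1-ξ^2) + (a₂:ℂ)*(ξ-conj ξ)*(1+ξ^2) - 2*(a₃:ℂ)*ξ*(1-ξ*conj ξ))
          - ((a₁:ℂ)*(conj ξ+ξ)*(1-(conj ξ)^2) + (a₂:ℂ)*(conj ξ-ξ)*(1+(conj ξ)^2)
              - 2*(a₃:ℂ)*(conj ξ)*(1-ξ*conj ξ)) * ξ^2
          + 2*ξ*((a₁:ℂ)*(ξ+conj ξ)^2 - (a₂:ℂ)*(ξ-conj ξ)^2 + (a₃:ℂ)*(1-ξ*conj ξ)^2))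
        / ((s:ℂ) * ((1:ℂ) + ξ*conj ξ)^2) := by
    rw [hz, hs2', hN]
    simp only [map_div₀, map_mul, map_sub, map_add, map_pow, map_ofNat, Complex.conj_conj,
      Complex.conj_ofReal, map_one]
    push_cast
    rw [← Complex.mul_conj]
  have hzc3 : conj (gamma ξ η r).1
      = (((a₁:ℂ)*(conj ξ+ξ)*(1-(conj ξ)^2) + (a₂:ℂ)*(conj ξ-ξ)*(1+(conj ξ)^2)
              - 2*(a₃:ℂ)*(conj ξ)*(1-ξ*conj ξ))
          - ((a₁:ℂ)*(ξ+conj ξ)*(1-ξ^2) + (a₂:ℂ)*(ξ-conj ξ)*(1+ξ^2)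
              - 2*(a₃:ℂ)*ξ*(1-ξ*conj ξ)) * (conj ξ)^2
          + 2*(conj ξ)*((a₁:ℂ)*(ξ+conj ξ)^2 - (a₂:ℂ)*(ξ-conj ξ)^2 + (a₃:ℂ)*(1-ξ*conj ξ)^2))
        / ((s:ℂ) * ((1:ℂ) + ξ*conj ξ)^2) := by
    rw [hzc, hs2', hN]
    simp only [map_div₀, map_mul, map_sub, map_add, map_pow, map_ofNat, Complex.conj_conj,
      Complex.conj_ofReal, map_one]
    push_cast
    rw [← Complex.mul_conj]
  have ht3 : ((gamma ξ η r).2 : ℂ)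
      = (-(((a₁:ℂ)*(ξ+conj ξ)*(1-ξ^2) + (a₂:ℂ)*(ξ-conj ξ)*(1+ξ^2)
              - 2*(a₃:ℂ)*ξ*(1-ξ*conj ξ)) * conj ξ
          + ((a₁:ℂ)*(conj ξ+ξ)*(1-(conj ξ)^2) + (a₂:ℂ)*(conj ξ-ξ)*(1+(conj ξ)^2)
              - 2*(a₃:ℂ)*(conj ξ)*(1-ξ*conj ξ)) * ξ)
          + (1 - ξ*conj ξ)*((a₁:ℂ)*(ξ+conj ξ)^2 - (a₂:ℂ)*(ξ-conj ξ)^2 + (a₃:ℂ)*(1-ξ*conj ξ)^2))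
        / ((s:ℂ) * ((1:ℂ) + ξ*conj ξ)^2) := by
    rw [ht, hs2', hN]
    simp only [map_div₀, map_mul, map_sub, map_add, map_pow, map_ofNat, Complex.conj_conj,
      Complex.conj_ofReal, map_one]
    push_cast
    rw [← Complex.mul_conj]
  have hre : ((gamma ξ η r).1.re : ℂ)
      = ((gamma ξ η r).1 + conj (gamma ξ η r).1)/2 := by
    have hb := Complex.add_conj (gamma ξ η r).1
    push_cast at hb
    linear_combination -hb/2
  have him : ((gamma ξ η r).1.im : ℂ) * Complex.I
      = ((gamma ξ η r).1 - conj (gamma ξ η r).1)/2 := by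
    have hb := Complex.sub_conj (gamma ξ η r).1
    push_cast at hb
    linear_combination -hb/2
  -- key identities
  have k1C : ((gamma ξ η r).1.re : ℂ) * (s:ℂ) = (a₁:ℂ) * (ξ + conj ξ) := by
    rw [hre, hzc3, hz3]
    field_simp
    ring
  have k2C : ((gamma ξ η r).1.im : ℂ) * Complex.I * (s:ℂ) = (a₂:ℂ) * (ξ - conj ξ) := by
    rw [him, hzc3, hz3]
    field_simp
    ring
  have k3C : ((gamma ξ η r).2 : ℂ) * (s:ℂ) = (a₃:ℂ) * (1 - ξ * conj ξ) := by
    rw [ht3]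
    field_simp
    ring
  -- real versions
  have k1 : (gamma ξ η r).1.re * s = 2 * a₁ * ξ.re := by
    have hb := Complex.add_conj ξ
    push_cast at hb
    rw [← Complex.ofReal_inj]
    push_cast
    linear_combination k1C + (a₁:ℂ) * hb
  have k2 : (gamma ξ η r).1.im * s = 2 * a₂ * ξ.im := by
    have hb := Complex.sub_conj ξ
    push_cast at hb
    rw [← Complex.ofReal_inj]
    push_cast
    linear_combination (-Complex.I) * k2C - (a₂:ℂ) * Complex.I * hb
      + (((gamma ξ η r).1.im : ℂ) * (s:ℂ) - 2*(a₂:ℂ)*(ξ.im:ℂ)) * Complex.I_sq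
  have k3 : (gamma ξ η r).2 * s = a₃ * (1 - Complex.normSq ξ) := by
    rw [← Complex.ofReal_inj]
    push_cast
    rw [← Complex.mul_conj]
    exact k3C
  -- assemble
  have e1 : (gamma ξ η r).1.re = 2 * a₁ * ξ.re / s := (eq_div_iff hs0.ne').mpr k1
  have e2 : (gamma ξ η r).1.im = 2 * a₂ * ξ.im / s := (eq_div_iff hs0.ne').mpr k2
  have e3 : (gamma ξ η r).2 = a₃ * (1 - Complex.normSq ξ) / s := (eq_div_iff hs0.ne').mpr k3
  rw [nu, Prod.ext_iff]
  constructor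
  · simp only [Prod.smul_mk, Complex.real_smul, smul_eq_mul]
    rw [e1, e2, hr]
    push_cast
    have hri := Complex.re_add_im ξ
    field_simp
    linear_combination (-1:ℂ) * hri
  · simp only [Prod.smul_mk, smul_eq_mul]
    rw [e3, hr]
    field_simp
end

section
/- Let a > b > 0, let ε = ±1, and let ξ ∈ ℂ with ξ ≠ 0. Set η = ε·(a/2)·(ξ/|ξ|)·(1−|ξ|²) and r = b + ε·2a|ξ|/(1+|ξ|²). Then the point (z,t) = γ_{ξ,η}(r), with z = x₁ + ix₂ and t = x₃, satisfies (√(x₁²+x₂²) − a)² + x₃² = b²; i.e. it lies on the rotationally symmetric torus with central radius a and tube radius b. (Here √(ξ/conj(ξ)) = ξ/|ξ| for ξ ≠ 0.) -/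
open Complex ComplexConjugate

/-- The torus parametrization: for `a > b > 0`, `ε = ±1`, `ξ ≠ 0`, with
`η = ε·(a/2)·(ξ/|ξ|)·(1−|ξ|²)` and `r = b + ε·2a|ξ|/(1+|ξ|²)`, the point
`(z,t) = γ_{ξ,η}(r)` lies on the rotationally symmetric torus
`(√(x₁²+x₂²) − a)² + x₃² = b²`. -/
theorem torus_parametrization (a b : ℝ) (hab : b < a) (hb : 0 < b)
    (ε : ℝ) (hε : ε = 1 ∨ ε = -1) (ξ : ℂ) (hξ : ξ ≠ 0) (η : ℂ) (r : ℝ)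
    (hη : η = (ε : ℂ) * ((a : ℂ) / 2) * (ξ / ((‖ξ‖ : ℝ) : ℂ)) *
        (((1 - Complex.normSq ξ : ℝ) : ℂ)))
    (hr : r = b + ε * (2 * a * ‖ξ‖) / (1 + Complex.normSq ξ)) :
    (Real.sqrt ((gamma ξ η r).1.re ^ 2 + (gamma ξ η r).1.im ^ 2) - a) ^ 2 +
      (gamma ξ η r).2 ^ 2 = b ^ 2 := by
  set s := ‖ξ‖ with hs_def
  have hs : 0 < s := by rw [hs_def]; exact norm_pos_iff.mpr hξ
  have hn : Complex.normSq ξ = s ^ 2 := by rw [hs_def]; exact (Complex.sq_norm ξ).symm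
  clear_value s
  have h1n : (0:ℝ) < 1 + s ^ 2 := by positivity
  have hsC : ((s : ℝ) : ℂ) ≠ 0 := Complex.ofReal_ne_zero.mpr hs.ne'
  have h1nC : ((1 + s ^ 2 : ℝ) : ℂ) ≠ 0 := Complex.ofReal_ne_zero.mpr h1n.ne'
  have h1nC' : (1 : ℂ) + ((s : ℝ) : ℂ) ^ 2 ≠ 0 := by
    rw [show (1 : ℂ) + ((s : ℝ) : ℂ) ^ 2 = ((1 + s ^ 2 : ℝ) : ℂ) by push_cast; ring]
    exact h1nC
  have h1nN : ((1 + Complex.normSq ξ : ℝ) : ℂ) ≠ 0 := by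
    rw [hn]; exact h1nC
  have hmul : (starRingEnd ℂ) ξ = ((s ^ 2 : ℝ) : ℂ) / ξ := by
    rw [eq_div_iff hξ, mul_comm, Complex.mul_conj, hn]
  set w : ℝ := ε * a + 2 * s * b / (1 + s ^ 2) with hw
  clear_value w
  set q : ℝ := ε * (a / 2) * (1 - s ^ 2) / s with hq
  clear_value q
  have hη' : η = ξ * ((q : ℝ) : ℂ) := by
    rw [hη, hq, hn]
    push_cast
    field_simp
  have hcη' : conj η = ((s ^ 2 : ℝ) : ℂ) / ξ * ((q : ℝ) : ℂ) := by
    rw [hη', map_mul, Complex.conj_ofReal, hmul]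
  have hz : (gamma ξ η r).1 = ξ * ((w / s : ℝ) : ℂ) := by
    have hR : 2 * (q - q * s ^ 2) + 2 * (1 + s ^ 2) * r = w / s * (1 + s ^ 2) ^ 2 := by
      rw [hq, hw, hr, hn]
      field_simp
      ring
    have hnum : 2 * (η - conj η * ξ ^ 2) + 2 * ξ * ((1 + Complex.normSq ξ : ℝ) : ℂ) * (r : ℂ)
        = ξ * ((w / s : ℝ) : ℂ) * (((1 + Complex.normSq ξ : ℝ) : ℂ)) ^ 2 := by
      have : 2 * (η - conj η * ξ ^ 2) + 2 * ξ * ((1 + Complex.normSq ξ : ℝ) : ℂ) * (r : ℂ)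
          = ξ * (((2 * (q - q * s ^ 2) + 2 * (1 + s ^ 2) * r : ℝ)) : ℂ) := by
        rw [hcη', hη', hn]
        push_cast
        field_simp
      rw [this, hR, hn]
      push_cast
      ring
    show (2 * (η - conj η * ξ ^ 2) + 2 * ξ * ((1 + Complex.normSq ξ : ℝ) : ℂ) * (r : ℂ)) /
        (((1 + Complex.normSq ξ : ℝ) : ℂ) ^ 2) = ξ * ((w / s : ℝ) : ℂ)
    rw [hnum]
    exact mul_div_cancel_right₀ _ (pow_ne_zero 2 h1nN)
  have hre : η * conj ξ + conj η * ξ = ((ε * a * (1 - s ^ 2) * s : ℝ) : ℂ) := by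
    simp only [hη, hn, map_mul, map_div₀, map_ofNat, Complex.conj_ofReal, hmul]
    push_cast
    field_simp
    ring
  have ht : (gamma ξ η r).2 = (1 - s ^ 2) * b / (1 + s ^ 2) := by
    simp only [gamma, hre, hn, Complex.ofReal_re, hr]
    field_simp
    ring
  have hsq : (gamma ξ η r).1.re ^ 2 + (gamma ξ η r).1.im ^ 2 = w ^ 2 := by
    have h1 : (gamma ξ η r).1.re ^ 2 + (gamma ξ η r).1.im ^ 2
        = Complex.normSq (gamma ξ η r).1 := by
      rw [Complex.normSq_apply]; ring
    rw [h1, hz, Complex.normSq_mul, Complex.normSq_ofReal, hn]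
    field_simp
  have ha : 0 < a := hb.trans hab
  have hd0 : 0 ≤ 2 * s * b / (1 + s ^ 2) := by positivity
  have hdb : 2 * s * b / (1 + s ^ 2) ≤ b := by
    rw [div_le_iff₀ h1n]; nlinarith [sq_nonneg (s - 1)]
  rw [hsq, ht, Real.sqrt_sq_eq_abs]
  have hid : (2 * s * b / (1 + s ^ 2)) ^ 2 + ((1 - s ^ 2) * b / (1 + s ^ 2)) ^ 2
      = b ^ 2 := by
    field_simp
    ring
  rcases hε with h | h <;> subst h <;> rw [hw]
  · rw [_root_.abs_of_nonneg (by linarith : (0:ℝ) ≤ 1 * a + 2 * s * b / (1 + s ^ 2))]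
    linear_combination hid
  · rw [_root_.abs_of_nonpos (by linarith : (-1) * a + 2 * s * b / (1 + s ^ 2) ≤ 0)]
    linear_combination hid
end

section
/- Let a > b > 0, ε = ±1, and ξ ∈ ℂ with ξ ≠ 0. With η = ε·(a/2)·(ξ/|ξ|)·(1−|ξ|²), r = b + ε·2a|ξ|/(1+|ξ|²), and (z,t) = γ_{ξ,η}(r), write z = x₁ + ix₂, t = x₃ and ρ = √(x₁²+x₂²). Then ρ > 0 and the direction of the line satisfies ν(ξ) = ( (z/ρ)·(ρ − a)/b , x₃/b ); i.e. ν(ξ) is the unit normal to the torus (√(x₁²+x₂²) − a)² + x₃² = b² at the point (z,t), so the line γ_{ξ,η} is normal to the torus there. -/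
set_option maxHeartbeats 1000000


open Complex ComplexConjugate

/-- In the torus parametrization, with `(z,t) = γ_{ξ,η}(r)`, `z = x₁ + ix₂`, `t = x₃`
and `ρ = √(x₁²+x₂²)`, we have `ρ > 0` and `ν(ξ) = ((z/ρ)·(ρ − a)/b, x₃/b)`: the line
`γ_{ξ,η}` is normal to the torus `(√(x₁²+x₂²) − a)² + x₃² = b²` at that point. -/
theorem torus_normal (a b : ℝ) (hab : b < a) (hb : 0 < b)
    (ε : ℝ) (hε : ε = 1 ∨ ε = -1) (ξ : ℂ) (hξ : ξ ≠ 0) (η : ℂ) (r : ℝ)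
    (hη : η = (ε : ℂ) * ((a : ℂ) / 2) * (ξ / ((‖ξ‖ : ℝ) : ℂ)) *
        (((1 - Complex.normSq ξ : ℝ) : ℂ)))
    (hr : r = b + ε * (2 * a * ‖ξ‖) / (1 + Complex.normSq ξ)) :
    0 < Real.sqrt ((gamma ξ η r).1.re ^ 2 + (gamma ξ η r).1.im ^ 2) ∧
    nu ξ = ((gamma ξ η r).1 /
        ((Real.sqrt ((gamma ξ η r).1.re ^ 2 + (gamma ξ η r).1.im ^ 2) : ℝ) : ℂ) *
        ((((Real.sqrt ((gamma ξ η r).1.re ^ 2 + (gamma ξ η r).1.im ^ 2) - a) / b : ℝ)) : ℂ),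
      (gamma ξ η r).2 / b) := by
  have hε2 : ε * ε = 1 := by rcases hε with h | h <;> rw [h] <;> norm_num
  set s : ℝ := ‖ξ‖ with hs_def
  have hs : 0 < s := by simpa [hs_def] using norm_pos_iff.mpr hξ
  have hns : Complex.normSq ξ = s ^ 2 := (Complex.sq_norm ξ).symm
  have hN : (0:ℝ) < 1 + s ^ 2 := by positivity
  have hNne : (1 + s ^ 2 : ℝ) ≠ 0 := ne_of_gt hN
  have hsC : ((s : ℝ) : ℂ) ≠ 0 := by exact_mod_cast hs.ne'
  have hNC : ((1 + s ^ 2 : ℝ) : ℂ) ≠ 0 := by exact_mod_cast hNne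
  have hNC' : (1 + (s : ℂ) ^ 2) ≠ 0 := by
    intro h; apply hNC; push_cast; exact h
  have hε2C : ((ε : ℝ) : ℂ) * ((ε : ℝ) : ℂ) = 1 := by exact_mod_cast hε2
  have hcc : ξ * conj ξ = ((s ^ 2 : ℝ) : ℂ) := by
    rw [Complex.mul_conj, hns]
  set k : ℝ := ε * a / 2 * (1 - s ^ 2) / s with hk_def
  have hη' : η = ((k : ℝ) : ℂ) * ξ := by
    rw [hη, hk_def, hns]
    push_cast
    field_simp
  have hcη : conj η = ((k : ℝ) : ℂ) * conj ξ := by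
    rw [hη', map_mul, Complex.conj_ofReal]
  set c : ℝ := 2 * b / (1 + s ^ 2) + ε * a / s with hc_def
  -- the first (complex) coordinate of the point
  have h2 : η - conj η * ξ ^ 2 = ((k * (1 - s ^ 2) : ℝ) : ℂ) * ξ := by
    rw [hcη, hη']
    push_cast
    linear_combination (norm := (push_cast; ring)) (-(k : ℂ) * ξ) * hcc
  have hz : (gamma ξ η r).1 = (c : ℂ) * ξ := by
    show (2 * (η - conj η * ξ ^ 2) + 2 * ξ * ((1 + Complex.normSq ξ : ℝ) : ℂ) * (r : ℂ)) /
      (((1 + Complex.normSq ξ : ℝ) : ℂ) ^ 2) = (c : ℂ) * ξ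
    rw [hns, h2, div_eq_iff (pow_ne_zero 2 hNC)]
    have hreal : 2 * (k * (1 - s ^ 2)) + 2 * (1 + s ^ 2) * r = c * (1 + s ^ 2) ^ 2 := by
      rw [hr, hns, hc_def, hk_def]
      field_simp
      ring
    have hrealC : ((2 * (k * (1 - s ^ 2)) + 2 * (1 + s ^ 2) * r : ℝ) : ℂ)
        = ((c * (1 + s ^ 2) ^ 2 : ℝ) : ℂ) := congrArg Complex.ofReal hreal
    push_cast at hrealC ⊢
    linear_combination ξ * hrealC
  -- the real part appearing in the second coordinate
  have hre : (η * conj ξ + conj η * ξ) = ((2 * k * s ^ 2 : ℝ) : ℂ) := by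
    rw [hcη, hη']
    push_cast
    linear_combination (norm := (push_cast; ring)) (2 * (k : ℂ)) * hcc
  have ht : (gamma ξ η r).2 = (1 - s ^ 2) * b / (1 + s ^ 2) := by
    show (-2 * (η * conj ξ + conj η * ξ).re + (1 - Complex.normSq ξ ^ 2) * r) /
      (1 + Complex.normSq ξ) ^ 2 = (1 - s ^ 2) * b / (1 + s ^ 2)
    rw [hre, Complex.ofReal_re, hns, hr, hns, hk_def]
    field_simp
    ring
  -- the radial distance ρ
  have hcs : ε * (c * s) = a + ε * (2 * b * s / (1 + s ^ 2)) := by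
    have h : c * s = 2 * b * s / (1 + s ^ 2) + ε * a := by
      rw [hc_def]; field_simp
    rw [h]; linear_combination a * hε2
  have hX : 2 * b * s / (1 + s ^ 2) ≤ b := by
    rw [div_le_iff₀ hN]
    nlinarith [sq_nonneg (1 - s)]
  have hXpos : 0 ≤ 2 * b * s / (1 + s ^ 2) := by positivity
  have hpos : 0 < ε * (c * s) := by
    rw [hcs]
    rcases hε with h | h <;> rw [h] <;> nlinarith
  have hρ : Real.sqrt ((gamma ξ η r).1.re ^ 2 + (gamma ξ η r).1.im ^ 2)
      = ε * (c * s) := by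
    rw [hz]
    have h1 : ((c : ℂ) * ξ).re ^ 2 + ((c : ℂ) * ξ).im ^ 2 = (ε * (c * s)) ^ 2 := by
      have hsq : ξ.re ^ 2 + ξ.im ^ 2 = s ^ 2 := by
        rw [← hns, Complex.normSq_apply]; ring
      simp only [Complex.mul_re, Complex.mul_im, Complex.ofReal_re, Complex.ofReal_im]
      linear_combination c ^ 2 * hsq - c ^ 2 * s ^ 2 * hε2
    rw [h1, Real.sqrt_sq hpos.le]
  refine ⟨by rw [hρ]; exact hpos, ?_⟩
  have hcne : (c : ℝ) ≠ 0 := by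
    intro h
    rw [h] at hpos
    simp at hpos
  have hεne : ε ≠ 0 := by rcases hε with h | h <;> rw [h] <;> norm_num
  rw [hρ, hz, ht]
  simp only [nu, Prod.mk.injEq, hns]
  constructor
  · -- complex coordinate equation
    have hεC : ((ε : ℝ) : ℂ) ≠ 0 := by exact_mod_cast hεne
    have hcC : ((c : ℝ) : ℂ) ≠ 0 := by exact_mod_cast hcne
    have key : ε * (c * s) - a = ε * (2 * b * s / (1 + s ^ 2)) := by
      rw [hcs]; ring
    rw [key]
    have hPC : ((ε * (c * s) : ℝ) : ℂ) ≠ 0 := by exact_mod_cast hpos.ne'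
    have hPQ : 2 * (ε * (c * s))
        = c * (ε * (2 * b * s / (1 + s ^ 2)) / b) * (1 + s ^ 2) := by
      field_simp
    rw [div_mul_eq_mul_div, div_eq_div_iff hNC hPC]
    linear_combination (norm := (push_cast; ring)) ξ * congrArg Complex.ofReal hPQ
  · field_simp
end
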